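/- Let ℓ_1,…,ℓ_m be {0,1}-valued random variables adapted to a filtration, with Σ_t ℓ_t ≤ B almost surely for a constant B, and let p_t := E[ℓ_t | F_{t−1}]. Then E[(1/m) Σ_t p_t] ≤ B/m, and with probability at least 1−δ, (1/m) Σ_{t=1}^m p_t ≤ (1 + 2B + 12 log(2 log m / δ))/m. -/

import Mathlib

open MeasureTheory in
/-- Key elementary inequality: `exp x * (1 - x) ≤ 1`. -/
theorem stmt10_exp_ineq (x : ℝ) : Real.exp x * (1 - x) ≤ 1 := by
  have h : 1 - x ≤ Real.exp (-x) := by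
    have := Real.add_one_le_exp (-x); linarith
  calc Real.exp x * (1 - x) ≤ Real.exp x * Real.exp (-x) := by
        exact mul_le_mul_of_nonneg_left h (Real.exp_pos x).le
    _ = 1 := by rw [← Real.exp_add]; simp

open MeasureTheory in
/-- Online-to-batch conversion: in-expectation and high-probability (Freedman) bounds on the
average conditional means of {0,1}-valued adapted losses whose sum is a.s. bounded by B. -/
theorem stmt10 {Ω : Type*} [m0 : MeasurableSpace Ω] {μ : Measure Ω} [IsProbabilityMeasure μ]
    (ℱ : Filtration ℕ m0) (ℓ : ℕ → Ω → ℝ)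
    (hadapt : ∀ t, StronglyMeasurable[ℱ (t + 1)] (ℓ t))
    (hval : ∀ t, ∀ᵐ ω ∂μ, ℓ t ω = 0 ∨ ℓ t ω = 1)
    (B : ℝ) (hB : 0 ≤ B) (m : ℕ) (hm : 1 ≤ m)
    (hbound : ∀ᵐ ω ∂μ, ∑ t ∈ Finset.range m, ℓ t ω ≤ B)
    (p : ℕ → Ω → ℝ) (hp : ∀ t, p t = μ[ℓ t|ℱ t])
    (δ : ℝ) (hδ : 0 < δ) (hδ1 : δ < 1) :
    (∫ ω, (1 / (m : ℝ)) * ∑ t ∈ Finset.range m, p t ω ∂μ ≤ B / m) ∧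
    (μ {ω | (1 / (m : ℝ)) * ∑ t ∈ Finset.range m, p t ω
        ≤ (1 + 2 * B + 12 * Real.log (2 * Real.log m / δ)) / m}
      ≥ ENNReal.ofReal (1 - δ)) := by
  have hmpos : (0 : ℝ) < m := by exact_mod_cast hm
  -- basic measurability / integrability facts
  have hℓsm : ∀ t, StronglyMeasurable (ℓ t) := fun t => (hadapt t).mono (ℱ.le _)
  have hℓ01 : ∀ t, ∀ᵐ ω ∂μ, 0 ≤ ℓ t ω ∧ ℓ t ω ≤ 1 := by
    intro t
    filter_upwards [hval t] with ω hω
    rcases hω with h | h <;> simp [h]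
  have hℓint : ∀ t, Integrable (ℓ t) μ := by
    intro t
    refine (integrable_const (1 : ℝ)).mono' (hℓsm t).aestronglyMeasurable ?_
    filter_upwards [hℓ01 t] with ω hω
    rw [Real.norm_eq_abs, abs_le]; constructor <;> linarith [hω.1, hω.2]
  have hpsm : ∀ t, StronglyMeasurable[ℱ t] (p t) := by
    intro t; rw [hp]; exact stronglyMeasurable_condExp
  have hpint : ∀ t, Integrable (p t) μ := by
    intro t; rw [hp]; exact integrable_condExp
  have hp0 : ∀ t, ∀ᵐ ω ∂μ, 0 ≤ p t ω := by
    intro t; rw [hp]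
    exact condExp_nonneg ((hℓ01 t).mono fun ω h => h.1)
  have hp1 : ∀ t, ∀ᵐ ω ∂μ, p t ω ≤ 1 := by
    intro t; rw [hp]
    have h1 := condExp_mono (μ := μ) (m := ℱ t) (hℓint t) (integrable_const (1 : ℝ))
      ((hℓ01 t).mono fun ω h => h.2)
    have h2 : μ[fun _ : Ω => (1 : ℝ)|ℱ t] = fun _ => (1 : ℝ) := condExp_const (ℱ.le t) 1
    filter_upwards [h1] with ω hω
    simpa [h2] using hω
  -- Part 1 : in expectation
  have hsum_int : Integrable (fun ω => ∑ t ∈ Finset.range m, ℓ t ω) μ :=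
    integrable_finset_sum _ fun t _ => hℓint t
  have part1 : ∫ ω, (1 / (m : ℝ)) * ∑ t ∈ Finset.range m, p t ω ∂μ ≤ B / m := by
    rw [integral_const_mul]
    have h1 : ∫ ω, ∑ t ∈ Finset.range m, p t ω ∂μ = ∑ t ∈ Finset.range m, ∫ ω, p t ω ∂μ :=
      integral_finset_sum _ fun t _ => hpint t
    have h2 : ∀ t, ∫ ω, p t ω ∂μ = ∫ ω, ℓ t ω ∂μ := by
      intro t; rw [hp]; exact integral_condExp (ℱ.le t)
    have h3 : ∑ t ∈ Finset.range m, ∫ ω, ℓ t ω ∂μ ≤ B := by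
      rw [← integral_finset_sum _ fun t _ => hℓint t]
      calc ∫ ω, ∑ t ∈ Finset.range m, ℓ t ω ∂μ ≤ ∫ _, B ∂μ :=
            integral_mono_ae hsum_int (integrable_const B) hbound
        _ = B := by simp
    have h4 : ∫ ω, ∑ t ∈ Finset.range m, p t ω ∂μ ≤ B := by
      rw [h1]; simp_rw [h2]; exact h3
    calc (1 / (m : ℝ)) * ∫ ω, ∑ t ∈ Finset.range m, p t ω ∂μ
        ≤ (1 / (m : ℝ)) * B := by
          apply mul_le_mul_of_nonneg_left h4 (by positivity)
      _ = B / m := one_div_mul_eq_div _ _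
  refine ⟨part1, ?_⟩
  -- Part 2 : high probability, via exponential supermartingale
  set c : ℝ := 1 - Real.exp (-1) with hc_def
  have he2 : (2 : ℝ) ≤ Real.exp 1 := by linarith [Real.add_one_le_exp 1]
  have hcharf : (1 / 2 : ℝ) ≤ c := by
    have : Real.exp (-1) ≤ 1 / 2 := by
      rw [Real.exp_neg]
      rw [inv_le_comm₀ (Real.exp_pos 1) (by norm_num)]
      simpa using he2
    simp only [hc_def]; linarith
  have hc1 : c ≤ 1 := by
    have := Real.exp_pos (-1); simp only [hc_def]; linarith
  have hc0 : 0 < c := by linarith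
  set S : ℕ → Ω → ℝ := fun n ω => ∑ t ∈ Finset.range n, (c * p t ω - ℓ t ω) with hS_def
  set f : ℕ → Ω → ℝ := fun n ω => Real.exp (S n ω) with hf_def
  have hSsm : ∀ n, StronglyMeasurable (S n) := by
    intro n
    exact Finset.stronglyMeasurable_fun_sum _ fun t _ =>
      (((hpsm t).mono (ℱ.le t)).const_mul c).sub (hℓsm t)
  have hfsm : ∀ n, StronglyMeasurable (f n) :=
    fun n => Real.continuous_exp.comp_stronglyMeasurable (hSsm n)
  have hae : ∀ᵐ ω ∂μ, ∀ t, (0 ≤ ℓ t ω ∧ ℓ t ω ≤ 1 ∧ (ℓ t ω = 0 ∨ ℓ t ω = 1))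
      ∧ (0 ≤ p t ω ∧ p t ω ≤ 1) := by
    rw [ae_all_iff]
    intro t
    filter_upwards [hℓ01 t, hval t, hp0 t, hp1 t] with ω h1 h2 h3 h4
    exact ⟨⟨h1.1, h1.2, h2⟩, h3, h4⟩
  have hSbound : ∀ᵐ ω ∂μ, ∀ n, S n ω ≤ n := by
    filter_upwards [hae] with ω hω
    intro n
    calc S n ω ≤ ∑ t ∈ Finset.range n, (1 : ℝ) := by
          apply Finset.sum_le_sum
          intro t _
          have h1 := (hω t).1.1
          have h2 := (hω t).2.2
          nlinarith [hc0, hc1]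
      _ = n := by simp
  have hfint : ∀ n, Integrable (f n) μ := by
    intro n
    refine (integrable_const (Real.exp n)).mono' (hfsm n).aestronglyMeasurable ?_
    filter_upwards [hSbound] with ω hω
    rw [Real.norm_eq_abs, abs_of_pos (Real.exp_pos _)]
    exact Real.exp_le_exp.2 (hω n)
  -- the supermartingale property in integral form
  have hkey : ∀ n, ∫ ω, f n ω ∂μ ≤ 1 := by
    intro n
    induction n with
    | zero => simp [hf_def, hS_def]
    | succ n ih =>
      set g : Ω → ℝ := fun ω => f n ω * Real.exp (c * p n ω) with hg_def
      set h : Ω → ℝ := fun ω => Real.exp (-(ℓ n ω)) with hh_def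
      have hfgh : f (n + 1) = fun ω => g ω * h ω := by
        funext ω
        simp only [hf_def, hg_def, hh_def, hS_def, Finset.sum_range_succ]
        rw [← Real.exp_add, ← Real.exp_add]
        congr 1
        ring
      have hgsm : StronglyMeasurable[ℱ n] g := by
        apply StronglyMeasurable.mul
        · apply Real.continuous_exp.comp_stronglyMeasurable
          apply Finset.stronglyMeasurable_fun_sum
          intro t ht
          have ht' := Finset.mem_range.1 ht
          exact (((hpsm t).mono (ℱ.mono ht'.le)).const_mul c).sub
            ((hadapt t).mono (ℱ.mono ht'))
        · exact Real.continuous_exp.comp_stronglyMeasurable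
            (((hpsm n).const_mul c))
      have hgint : Integrable g μ := by
        refine (integrable_const (Real.exp (n + 1))).mono'
          ((hgsm.mono (ℱ.le n)).aestronglyMeasurable) ?_
        filter_upwards [hSbound, hae] with ω h1 h2
        simp only [hg_def, hf_def]
        rw [Real.norm_eq_abs, abs_of_pos (by positivity), ← Real.exp_add]
        apply Real.exp_le_exp.2
        have := (h2 n).2.1
        have := (h2 n).2.2
        have := h1 n
        push_cast
        nlinarith [hc0, hc1]
      have hhint : Integrable h μ := by
        refine (integrable_const (1 : ℝ)).mono'
          ((Real.continuous_exp.comp_stronglyMeasurable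
            (hℓsm n).neg).aestronglyMeasurable) ?_
        filter_upwards [hℓ01 n] with ω hω
        rw [Real.norm_eq_abs, abs_of_pos (Real.exp_pos _)]
        calc Real.exp (-(ℓ n ω)) ≤ Real.exp 0 := Real.exp_le_exp.2 (by linarith [hω.1])
          _ = 1 := Real.exp_zero
      have hghint : Integrable (fun ω => g ω * h ω) μ := by rw [← hfgh]; exact hfint (n + 1)
      -- identify the conditional expectation of h
      have hhae : h =ᵐ[μ] fun ω => 1 - c * ℓ n ω := by
        filter_upwards [hval n] with ω hω
        rcases hω with h0 | h1
        · simp [hh_def, h0]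
        · simp [hh_def, h1, hc_def]
      have hcond : μ[h|ℱ n] =ᵐ[μ] fun ω => 1 - c * p n ω := by
        have e1 : μ[h|ℱ n] =ᵐ[μ] μ[(fun ω => 1 - c * ℓ n ω)|ℱ n] := condExp_congr_ae hhae
        have e2 : (fun ω => 1 - c * ℓ n ω) = (fun _ : Ω => (1 : ℝ)) - c • ℓ n := by
          funext ω; simp [smul_eq_mul]
        have e3 : μ[(fun _ : Ω => (1 : ℝ)) - c • ℓ n|ℱ n]
            =ᵐ[μ] μ[(fun _ : Ω => (1 : ℝ))|ℱ n] - μ[c • ℓ n|ℱ n] :=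
          condExp_sub (integrable_const 1) ((hℓint n).smul c) _
        have e4 : μ[c • ℓ n|ℱ n] =ᵐ[μ] c • μ[ℓ n|ℱ n] := condExp_smul c (ℓ n) _
        have e5 : μ[(fun _ : Ω => (1 : ℝ))|ℱ n] = fun _ => (1 : ℝ) := condExp_const (ℱ.le n) 1
        rw [e2] at e1
        refine e1.trans (e3.trans ?_)
        filter_upwards [e4] with ω h4
        simp only [Pi.sub_apply, e5, h4, Pi.smul_apply, smul_eq_mul, hp n]
      -- pull-out property
      have hpull : μ[fun ω => g ω * h ω|ℱ n] =ᵐ[μ] fun ω => g ω * (μ[h|ℱ n]) ω := by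
        have := condExp_mul_of_stronglyMeasurable_left hgsm (by exact hghint) hhint
        filter_upwards [this] with ω hω
        exact hω
      have heq : ∫ ω, f (n + 1) ω ∂μ = ∫ ω, g ω * (1 - c * p n ω) ∂μ := by
        have hic : ∫ ω, g ω * h ω ∂μ
            = ∫ ω, (μ[fun ω => g ω * h ω|ℱ n]) ω ∂μ := (integral_condExp (ℱ.le n)).symm
        rw [hfgh, hic]
        apply integral_congr_ae
        filter_upwards [hpull, hcond] with ω h1 h2
        rw [h1, h2]
      have hint2 : Integrable (fun ω => g ω * (1 - c * p n ω)) μ := by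
        have hcint : Integrable (μ[fun ω => g ω * h ω|ℱ n]) μ := integrable_condExp
        refine hcint.congr ?_
        filter_upwards [hpull, hcond] with ω h1 h2
        rw [h1, h2]
      have hle : ∫ ω, g ω * (1 - c * p n ω) ∂μ ≤ ∫ ω, f n ω ∂μ := by
        apply integral_mono_ae hint2 (hfint n)
        filter_upwards [] with ω
        simp only [hg_def]
        have hfnn : 0 ≤ f n ω := (Real.exp_pos _).le
        calc f n ω * Real.exp (c * p n ω) * (1 - c * p n ω)
            = f n ω * (Real.exp (c * p n ω) * (1 - c * p n ω)) := by ring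
          _ ≤ f n ω * 1 := mul_le_mul_of_nonneg_left (stmt10_exp_ineq _) hfnn
          _ = f n ω := mul_one _
      rw [heq]; exact le_trans hle ih
  -- Markov's inequality
  set Ebad : Set Ω := {ω | 1 / δ ≤ f m ω} with hEbad_def
  have hEbad_meas : MeasurableSet Ebad :=
    measurableSet_le measurable_const (hfsm m).measurable
  have hmarkov : μ Ebad ≤ ENNReal.ofReal δ := by
    have h1 := mul_meas_ge_le_integral_of_nonneg
      (μ := μ) (f := f m) (Filter.Eventually.of_forall fun ω => (Real.exp_pos _).le)
      (hfint m) (1 / δ)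
    have h2 : (1 / δ) * (μ Ebad).toReal ≤ 1 := le_trans h1 (hkey m)
    have h3 : (μ Ebad).toReal ≤ δ := by
      rw [div_mul_eq_mul_div, div_le_one hδ, one_mul] at h2
      linarith
    have h4 : μ Ebad ≠ ⊤ := (measure_lt_top μ _).ne
    calc μ Ebad = ENNReal.ofReal (μ Ebad).toReal := (ENNReal.ofReal_toReal h4).symm
      _ ≤ ENNReal.ofReal δ := ENNReal.ofReal_le_ofReal h3
  -- the good event implies the target inequality
  have himp : ∀ᵐ ω ∂μ, ω ∈ Ebadᶜ → (1 / (m : ℝ)) * ∑ t ∈ Finset.range m, p t ω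
      ≤ (1 + 2 * B + 12 * Real.log (2 * Real.log m / δ)) / m := by
    filter_upwards [hae, hbound] with ω hω hb
    intro hmem
    have hpsum_nonneg : 0 ≤ ∑ t ∈ Finset.range m, p t ω :=
      Finset.sum_nonneg fun t _ => (hω t).2.1
    have hgoal : ∑ t ∈ Finset.range m, p t ω
        ≤ 1 + 2 * B + 12 * Real.log (2 * Real.log m / δ) := by
      rcases eq_or_lt_of_le hm with hm1 | hm2
      · -- m = 1 : trivial since p 0 ≤ 1
        have : (1 : ℕ) = m := hm1
        subst this
        simp only [Finset.sum_range_one, Nat.cast_one, Real.log_one, mul_zero, zero_div,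
          Real.log_zero, add_zero]
        have := (hω 0).2.2
        linarith
      · -- m ≥ 2
        have hm2' : (2 : ℝ) ≤ (m : ℝ) := by exact_mod_cast hm2
        have hflt : f m ω < 1 / δ := lt_of_not_ge hmem
        have hS : S m ω < Real.log (1 / δ) := by
          have := Real.log_lt_log (Real.exp_pos (S m ω)) hflt
          rwa [Real.log_exp] at this
        have hSval : S m ω = c * (∑ t ∈ Finset.range m, p t ω)
            - ∑ t ∈ Finset.range m, ℓ t ω := by
          simp only [hS_def, Finset.sum_sub_distrib, Finset.mul_sum]
        have hlogδ : 0 ≤ Real.log (1 / δ) :=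
          Real.log_nonneg (one_le_one_div hδ hδ1.le)
        have hcS : c * (∑ t ∈ Finset.range m, p t ω) ≤ B + Real.log (1 / δ) := by
          rw [hSval] at hS; linarith
        have hsum2 : ∑ t ∈ Finset.range m, p t ω ≤ 2 * B + 2 * Real.log (1 / δ) := by
          nlinarith [hcharf, hpsum_nonneg]
        -- compare log(1/δ) with log(2 log m / δ)
        have hlog2 : (0.6931471803 : ℝ) < Real.log 2 := Real.log_two_gt_d9
        have hlogm : Real.log 2 ≤ Real.log m :=
          Real.log_le_log (by norm_num) hm2'
        have h12 : (1 : ℝ) ≤ 2 * Real.log m := by nlinarith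
        have hA : 1 / δ ≤ 2 * Real.log m / δ := (div_le_div_iff_of_pos_right hδ).2 h12
        have hApos : 0 < 1 / δ := by positivity
        have hlogA : Real.log (1 / δ) ≤ Real.log (2 * Real.log m / δ) :=
          Real.log_le_log hApos hA
        linarith
    calc (1 / (m : ℝ)) * ∑ t ∈ Finset.range m, p t ω
        ≤ (1 / (m : ℝ)) * (1 + 2 * B + 12 * Real.log (2 * Real.log m / δ)) :=
          mul_le_mul_of_nonneg_left hgoal (by positivity)
      _ = _ := one_div_mul_eq_div _ _
  -- conclude
  have hsub : Ebadᶜ ≤ᵐ[μ] {ω | (1 / (m : ℝ)) * ∑ t ∈ Finset.range m, p t ω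
      ≤ (1 + 2 * B + 12 * Real.log (2 * Real.log m / δ)) / m} := himp
  calc ENNReal.ofReal (1 - δ) = 1 - ENNReal.ofReal δ := by
        rw [ENNReal.ofReal_sub _ hδ.le, ENNReal.ofReal_one]
    _ ≤ 1 - μ Ebad := tsub_le_tsub_left hmarkov 1
    _ = μ Ebadᶜ := by
        rw [measure_compl hEbad_meas (measure_lt_top μ _).ne, measure_univ]
    _ ≤ _ := measure_mono_ae hsub
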